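/- Let V be a vertex algebra over a field F and U ⊆ V a subspace such that V is spanned by vectors u^{(1)}_{-n₁} ⋯ u^{(r)}_{-n_r} 𝟙 with r ≥ 0, u^{(i)} ∈ U, n_i ≥ 1. Then there is a surjective algebra homomorphism from the symmetric algebra S(U) onto the commutative algebra V/C₂(V) sending u ∈ U to u + C₂(V). -/

import Mathlib

/-- A *vertex algebra* over a field `F` (of arbitrary characteristic): a vector
space `V` with a linear map `Y` sending `u ∈ V` to the family of its modes
`(u_n)_{n ∈ ℤ}` (so `Y u n v = u_n v`), and a vacuum vector `𝟙`, subject to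
truncation, the vacuum property `Y(𝟙,x) = id`, the creation property
`Y(v,x)𝟙 ∈ V[[x]]` with constant term `v`, and the Borcherds/Jacobi identity
in components (all sums are finitely supported, by truncation). -/
class VertexAlgebra (F : Type*) (V : Type*) [Field F] [AddCommGroup V]
    [Module F V] where
  Y : V →ₗ[F] ℤ → Module.End F V
  vacuum : V
  trunc : ∀ u v : V, ∃ N : ℤ, ∀ n ≥ N, Y u n v = 0
  vacuum_eq : ∀ n : ℤ, Y vacuum n = if n = -1 then 1 else 0
  create_neg_one : ∀ v : V, Y v (-1) vacuum = v
  create_nonneg : ∀ (v : V) (n : ℤ), 0 ≤ n → Y v n vacuum = 0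
  borcherds : ∀ (u v w : V) (m n k : ℤ),
    (∑ᶠ i : ℕ, ((Ring.choose m i : ℤ) : F) • Y (Y u (n + i) v) (m + k - i) w) =
    ∑ᶠ i : ℕ, ((-1 : F) ^ i * ((Ring.choose n i : ℤ) : F)) •
      (Y u (m + n - i) (Y v (k + i) w) -
        (-1 : F) ^ n.natAbs • Y v (n + k - i) (Y u (m + i) w))

open VertexAlgebra

/-- The commutation relation defining the symmetric algebra as a quotient of
the tensor algebra. -/
inductive SymRel (R : Type*) (M : Type*) [CommRing R] [AddCommGroup M]
    [Module R M] : TensorAlgebra R M → TensorAlgebra R M → Prop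
  | comm (a b : M) : SymRel R M (TensorAlgebra.ι R a * TensorAlgebra.ι R b)
      (TensorAlgebra.ι R b * TensorAlgebra.ι R a)

/-- The symmetric algebra `S(M)` of a module `M` over `R`. -/
abbrev SymmetricAlgebra' (R : Type*) (M : Type*) [CommRing R] [AddCommGroup M]
    [Module R M] := RingQuot (SymRel R M)

/-- The canonical linear map `M → S(M)`. -/
def SymmetricAlgebra'.ι (R : Type*) (M : Type*) [CommRing R] [AddCommGroup M]
    [Module R M] : M →ₗ[R] SymmetricAlgebra' R M :=
  (RingQuot.mkAlgHom R (SymRel R M)).toLinearMap.comp (TensorAlgebra.ι R)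

section St17Aux

variable {F V : Type*} [Field F] [AddCommGroup V] [Module F V] [VertexAlgebra F V]

lemma st17_finsum_mem (p : Submodule F V) (f : ℕ → V) (h : ∀ i, f i ∈ p) :
    (∑ᶠ i, f i) ∈ p := by
  by_cases hf : (Function.support f).Finite
  · rw [finsum_eq_sum f hf]
    exact Submodule.sum_mem _ fun i _ => h i
  · rw [finsum_of_infinite_support hf]
    exact p.zero_mem

lemma st17_finsum_sub_single_mem (p : Submodule F V) (f : ℕ → V) (t : V)
    (hf : (Function.support f).Finite) (h0 : f 0 - t ∈ p)
    (hi : ∀ i : ℕ, i ≠ 0 → f i ∈ p) : (∑ᶠ i, f i) - t ∈ p := by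
  classical
  set e : ℕ → V := fun i => if i = 0 then t else 0 with he
  have hef : (Function.support e).Finite :=
    Set.Finite.subset (Set.finite_singleton 0)
      (Function.support_subset_iff'.2 fun i hi => by
        simp only [Set.mem_singleton_iff] at hi
        simp [he, hi])
  have hsum_e : ∑ᶠ i, e i = t := by
    rw [finsum_eq_single e 0 fun i hi => by simp [he, hi]]
    simp [he]
  set g : ℕ → V := fun i => f i - e i with hg
  have hgf : (Function.support g).Finite := by
    apply Set.Finite.subset (hf.union hef)
    intro i hi
    by_contra hc
    simp only [Set.mem_union, Function.mem_support, not_or, not_not] at hc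
    apply hi
    simp [hg, hc.1, hc.2]
  have hsplit : ∑ᶠ i, f i = (∑ᶠ i, g i) + ∑ᶠ i, e i := by
    rw [← finsum_add_distrib hgf hef]
    exact finsum_congr fun i => by simp [hg]
  have hgmem : (∑ᶠ i, g i) ∈ p := by
    apply st17_finsum_mem
    intro i
    rcases eq_or_ne i 0 with rfl | hne
    · simpa [hg, he] using h0
    · simpa [hg, he, hne] using hi i hne
  rw [hsplit, hsum_e]
  simpa using hgmem

lemma st17_support_fin (f : ℕ → V) (N : ℕ) (h : ∀ i, N ≤ i → f i = 0) :
    (Function.support f).Finite := by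
  apply Set.Finite.subset (Set.finite_Iio N)
  intro i hi
  simp only [Set.mem_Iio]
  by_contra hc
  exact hi (h i (by omega))

lemma st17_mem_C2 (C2 : Submodule F V)
    (hC2 : C2 = Submodule.span F
      {x : V | ∃ (u v : V) (k : ℕ), x = Y (F := F) u (-2 - (k : ℤ)) v})
    (u w : V) (n : ℤ) (hn : n ≤ -2) : Y (F := F) u n w ∈ C2 := by
  subst hC2
  apply Submodule.subset_span
  set t := (-2 - n).toNat with ht
  have h : -2 - (t : ℤ) = n := by omega
  exact ⟨u, w, t, by rw [h]⟩

lemma st17_comm_mem (C2 : Submodule F V)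
    (hC2mem : ∀ (a w : V) (n : ℤ), n ≤ -2 → Y (F := F) a n w ∈ C2)
    (u v w : V) :
    Y (F := F) u (-1) (Y (F := F) v (-1) w)
      - Y (F := F) v (-1) (Y (F := F) u (-1) w) ∈ C2 := by
  have hb := borcherds (F := F) u v w (-1) 0 (-1)
  have h0 : ∀ i : ℕ, i ≠ 0 → ((-1 : F) ^ i * ((Ring.choose (0:ℤ) i : ℤ) : F)) •
      (Y (F := F) u (-1 + 0 - (i:ℤ)) (Y (F := F) v (-1 + (i:ℤ)) w) -
        (-1 : F) ^ (0:ℤ).natAbs • Y (F := F) v (0 + -1 - (i:ℤ)) (Y (F := F) u (-1 + (i:ℤ)) w)) = 0 := by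
    intro i hi
    rw [Ring.choose_zero_pos ℤ (Nat.pos_of_ne_zero hi)]
    simp
  rw [finsum_eq_single _ 0 h0] at hb
  have hmem : (∑ᶠ i : ℕ, ((Ring.choose (-1:ℤ) i : ℤ) : F) •
      Y (F := F) (Y (F := F) u (0 + (i:ℤ)) v) (-1 + -1 - (i:ℤ)) w) ∈ C2 :=
    st17_finsum_mem C2 _ fun i => Submodule.smul_mem _ _ (hC2mem _ _ _ (by omega))
  rw [hb] at hmem
  simpa [Ring.choose_zero_right] using hmem

lemma st17_assoc_mem (C2 : Submodule F V)
    (hC2mem : ∀ (a w : V) (n : ℤ), n ≤ -2 → Y (F := F) a n w ∈ C2)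
    (u v w : V) :
    Y (F := F) (Y (F := F) u (-1) v) (-1) w
      - Y (F := F) u (-1) (Y (F := F) v (-1) w) ∈ C2 := by
  have hb := borcherds (F := F) u v w 0 (-1) (-1)
  have h0 : ∀ i : ℕ, i ≠ 0 → ((Ring.choose (0:ℤ) i : ℤ) : F) •
      Y (F := F) (Y (F := F) u (-1 + (i:ℤ)) v) (0 + -1 - (i:ℤ)) w = 0 := by
    intro i hi
    rw [Ring.choose_zero_pos ℤ (Nat.pos_of_ne_zero hi)]
    simp
  rw [finsum_eq_single _ 0 h0] at hb
  -- the RHS family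
  set f : ℕ → V := fun i => ((-1 : F) ^ i * ((Ring.choose (-1:ℤ) i : ℤ) : F)) •
      (Y (F := F) u (0 + -1 - (i:ℤ)) (Y (F := F) v (-1 + (i:ℤ)) w) -
        (-1 : F) ^ (-1:ℤ).natAbs • Y (F := F) v (-1 + -1 - (i:ℤ)) (Y (F := F) u (0 + (i:ℤ)) w)) with hf
  have hfin : (Function.support f).Finite := by
    obtain ⟨N1, h1⟩ := trunc (F := F) v w
    obtain ⟨N2, h2⟩ := trunc (F := F) u w
    apply st17_support_fin f ((N1 + 1).toNat + (N2 + 1).toNat)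
    intro i hi
    have e1 : Y (F := F) v (-1 + (i:ℤ)) w = 0 := h1 _ (by omega)
    have e2 : Y (F := F) u (0 + (i:ℤ)) w = 0 := h2 _ (by omega)
    rw [hf]
    simp only [e1, e2, map_zero, smul_zero, sub_zero, smul_eq_zero]
  have h1 := st17_finsum_sub_single_mem C2 f
      (Y (F := F) u (-1) (Y (F := F) v (-1) w)) hfin ?_ ?_
  · rw [← hb] at h1
    simpa [Ring.choose_zero_right] using h1
  · -- f 0 - t ∈ C2
    have : Y (F := F) v (-2) (Y (F := F) u 0 w) ∈ C2 := hC2mem _ _ _ (by norm_num)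
    simpa [hf, Ring.choose_zero_right, sub_eq_iff_eq_add] using this
  · intro i hi
    rw [hf]
    refine Submodule.smul_mem _ _ (Submodule.sub_mem _ ?_ ?_)
    · exact hC2mem _ _ _ (by omega)
    · exact Submodule.smul_mem _ _ (hC2mem _ _ _ (by omega))

end St17Aux

/-- Let `V` be a vertex algebra over a field `F` and
`U ⊆ V` a subspace such that `V` is spanned by the vectors
`u¹_{-n₁} ⋯ uʳ_{-n_r} 𝟙` with `r ≥ 0`, `uⁱ ∈ U`, `nᵢ ≥ 1`.  Then there is a
surjective algebra homomorphism `S(U) → V/C₂(V)` sending `u ∈ U` to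
`u + C₂(V)` (here `V/C₂(V)` carries the commutative associative product `mul`
induced by `u·v = u_{-1}v`, as in Statement 16). -/
theorem statement17 (F : Type*) [Field F] (V : Type*) [AddCommGroup V]
    [Module F V] [VertexAlgebra F V] (U : Submodule F V)
    (hspan : Submodule.span F
      {x : V | ∃ l : List (V × ℕ), (∀ q ∈ l, q.1 ∈ (U : Set V)) ∧
        x = l.foldr (fun q w => Y (F := F) q.1 (-(q.2 : ℤ) - 1) w)
          (vacuum (F := F) (V := V))} = ⊤)
    (C2 : Submodule F V)
    (hC2 : C2 = Submodule.span F
      {x : V | ∃ (u v : V) (k : ℕ), x = Y (F := F) u (-2 - (k : ℤ)) v})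
    (mul : (V ⧸ C2) → (V ⧸ C2) → (V ⧸ C2))
    (hmul : ∀ u v : V, mul (Submodule.Quotient.mk u) (Submodule.Quotient.mk v) =
      Submodule.Quotient.mk (Y (F := F) u (-1) v)) :
    ∃ π : SymmetricAlgebra' F U →ₗ[F] V ⧸ C2,
      Function.Surjective π ∧
      π 1 = Submodule.Quotient.mk (vacuum (F := F) (V := V)) ∧
      (∀ x y : SymmetricAlgebra' F U, π (x * y) = mul (π x) (π y)) ∧
      ∀ u : U, π (SymmetricAlgebra'.ι F U u) = Submodule.Quotient.mk (u : V) := by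
  classical
  have hC2mem : ∀ (a w : V) (n : ℤ), n ≤ -2 → Y (F := F) a n w ∈ C2 :=
    fun a w n hn => st17_mem_C2 C2 hC2 a w n hn
  have hmks : Function.Surjective (Submodule.Quotient.mk (p := C2)) :=
    Submodule.Quotient.mk_surjective C2
  -- basic properties of mul
  have hcomm : ∀ x y : V ⧸ C2, mul x y = mul y x := by
    intro x y
    obtain ⟨a, rfl⟩ := hmks x
    obtain ⟨b, rfl⟩ := hmks y
    rw [hmul, hmul, Submodule.Quotient.eq]
    have := st17_comm_mem C2 hC2mem a b (vacuum (F := F) (V := V))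
    rwa [create_neg_one, create_neg_one] at this
  have hassoc : ∀ x y z : V ⧸ C2, mul (mul x y) z = mul x (mul y z) := by
    intro x y z
    obtain ⟨a, rfl⟩ := hmks x
    obtain ⟨b, rfl⟩ := hmks y
    obtain ⟨c, rfl⟩ := hmks z
    rw [hmul, hmul, hmul, hmul, Submodule.Quotient.eq]
    exact st17_assoc_mem C2 hC2mem a b c
  have hone_mul : ∀ x : V ⧸ C2,
      mul (Submodule.Quotient.mk (vacuum (F := F) (V := V))) x = x := by
    intro x
    obtain ⟨a, rfl⟩ := hmks x
    rw [hmul, vacuum_eq]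
    simp
  have hmul_one : ∀ x : V ⧸ C2,
      mul x (Submodule.Quotient.mk (vacuum (F := F) (V := V))) = x := by
    intro x
    obtain ⟨a, rfl⟩ := hmks x
    rw [hmul, create_neg_one]
  have hldist : ∀ x y z : V ⧸ C2, mul x (y + z) = mul x y + mul x z := by
    intro x y z
    obtain ⟨a, rfl⟩ := hmks x
    obtain ⟨b, rfl⟩ := hmks y
    obtain ⟨c, rfl⟩ := hmks z
    rw [← Submodule.Quotient.mk_add, hmul, hmul, hmul, ← Submodule.Quotient.mk_add, map_add]
  have hrdist : ∀ x y z : V ⧸ C2, mul (x + y) z = mul x z + mul y z := by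
    intro x y z
    obtain ⟨a, rfl⟩ := hmks x
    obtain ⟨b, rfl⟩ := hmks y
    obtain ⟨c, rfl⟩ := hmks z
    rw [← Submodule.Quotient.mk_add, hmul, hmul, hmul, ← Submodule.Quotient.mk_add,
      map_add]
    simp
  have hsmul_mul : ∀ (r : F) (x y : V ⧸ C2), mul (r • x) y = r • mul x y := by
    intro r x y
    obtain ⟨a, rfl⟩ := hmks x
    obtain ⟨b, rfl⟩ := hmks y
    rw [← Submodule.Quotient.mk_smul, hmul, hmul, ← Submodule.Quotient.mk_smul,
      map_smul]
    rfl
  have hmul_smul : ∀ (r : F) (x y : V ⧸ C2), mul x (r • y) = r • mul x y := by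
    intro r x y
    obtain ⟨a, rfl⟩ := hmks x
    obtain ⟨b, rfl⟩ := hmks y
    rw [← Submodule.Quotient.mk_smul, hmul, hmul, ← Submodule.Quotient.mk_smul,
      map_smul]
  have hzero_mul : ∀ x : V ⧸ C2, mul 0 x = 0 := by
    intro x
    obtain ⟨a, rfl⟩ := hmks x
    rw [show (0 : V ⧸ C2) = Submodule.Quotient.mk 0 from (Submodule.Quotient.mk_zero C2).symm,
      hmul]
    simp
  have hmul_zero : ∀ x : V ⧸ C2, mul x 0 = 0 := by
    intro x
    obtain ⟨a, rfl⟩ := hmks x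
    rw [show (0 : V ⧸ C2) = Submodule.Quotient.mk 0 from (Submodule.Quotient.mk_zero C2).symm,
      hmul]
    simp
  letI instCR : CommRing (V ⧸ C2) :=
    { (inferInstance : AddCommGroup (V ⧸ C2)) with
      mul := mul
      one := Submodule.Quotient.mk (vacuum (F := F) (V := V))
      mul_assoc := hassoc
      one_mul := hone_mul
      mul_one := hmul_one
      left_distrib := hldist
      right_distrib := hrdist
      mul_comm := hcomm
      zero_mul := hzero_mul
      mul_zero := hmul_zero }
  letI instAlg : Algebra F (V ⧸ C2) := Algebra.ofModule hsmul_mul hmul_smul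
  let f : U →ₗ[F] V ⧸ C2 := C2.mkQ.comp U.subtype
  let T : TensorAlgebra F U →ₐ[F] V ⧸ C2 := TensorAlgebra.lift F f
  have hT : ∀ ⦃x y : TensorAlgebra F U⦄, SymRel F U x y → T x = T y := by
    intro x y h
    cases h with
    | comm a b =>
      rw [map_mul, map_mul]
      exact hcomm _ _
  let π0 : SymmetricAlgebra' F U →ₐ[F] V ⧸ C2 := RingQuot.liftAlgHom F ⟨T, hT⟩
  have hπι : ∀ u : U, π0 (SymmetricAlgebra'.ι F U u) = Submodule.Quotient.mk (u : V) := by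
    intro u
    show π0 (RingQuot.mkAlgHom F (SymRel F U) (TensorAlgebra.ι F u)) = _
    rw [RingQuot.liftAlgHom_mkAlgHom_apply, TensorAlgebra.lift_ι_apply]
    rfl
  have hπ1 : π0 1 = Submodule.Quotient.mk (vacuum (F := F) (V := V)) := map_one π0
  have hπmul : ∀ x y : SymmetricAlgebra' F U, π0 (x * y) = mul (π0 x) (π0 y) :=
    fun x y => map_mul π0 x y
  -- surjectivity
  have listcase : ∀ l : List (V × ℕ), (∀ q ∈ l, q.1 ∈ (U : Set V)) →
      ∃ s : SymmetricAlgebra' F U, π0 s = Submodule.Quotient.mk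
        (l.foldr (fun q w => Y (F := F) q.1 (-(q.2 : ℤ) - 1) w)
          (vacuum (F := F) (V := V))) := by
    intro l
    induction l with
    | nil => exact fun _ => ⟨1, hπ1⟩
    | cons q l ih =>
      intro hq
      obtain ⟨s, hs⟩ := ih fun p hp => hq p (List.mem_cons_of_mem _ hp)
      rw [List.foldr_cons]
      rcases Nat.eq_zero_or_pos q.2 with h0 | hpos
      · have hmode : (-(q.2 : ℤ) - 1) = -1 := by rw [h0]; norm_num
        rw [hmode]
        refine ⟨SymmetricAlgebra'.ι F U ⟨q.1, hq q List.mem_cons_self⟩ * s, ?_⟩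
        rw [hπmul, hπι, hs, hmul]
      · refine ⟨0, ?_⟩
        rw [map_zero]
        symm
        rw [Submodule.Quotient.mk_eq_zero]
        exact hC2mem _ _ _ (by omega)
  have hsurj : Function.Surjective π0 := by
    intro z
    obtain ⟨x, rfl⟩ := hmks z
    have hx : x ∈ Submodule.span F
        {x : V | ∃ l : List (V × ℕ), (∀ q ∈ l, q.1 ∈ (U : Set V)) ∧
          x = l.foldr (fun q w => Y (F := F) q.1 (-(q.2 : ℤ) - 1) w)
            (vacuum (F := F) (V := V))} := by
      rw [hspan]; exact Submodule.mem_top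
    induction hx using Submodule.span_induction with
    | mem x hx =>
      obtain ⟨l, hl, rfl⟩ := hx
      exact listcase l hl
    | zero => exact ⟨0, by rw [map_zero, Submodule.Quotient.mk_zero]⟩
    | add a b ha hb iha ihb =>
      obtain ⟨s, hs⟩ := iha
      obtain ⟨t, ht⟩ := ihb
      exact ⟨s + t, by rw [map_add, hs, ht, Submodule.Quotient.mk_add]⟩
    | smul r a ha iha =>
      obtain ⟨s, hs⟩ := iha
      exact ⟨r • s, by rw [map_smul, hs, Submodule.Quotient.mk_smul]⟩
  refine ⟨π0.toLinearMap, hsurj, hπ1, hπmul, hπι⟩
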